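/- Suppose V : [0,T) → ℝ is C¹, c₁, c₂ > 0, and V'(t) ≤ -c₁ |V(t)|^{4/3} - c₂ for all t ∈ [0,T). Then T ≤ (1+|V(0)|)/c₂ + 3/c₁. -/

import Mathlib

private lemma key_mvt {f f' : ℝ → ℝ} {a b C : ℝ} (hab : a ≤ b)
    (hd : ∀ x ∈ Set.Icc a b, HasDerivAt f (f' x) x)
    (hle : ∀ x ∈ Set.Icc a b, f' x ≤ C) : f b - f a ≤ C * (b - a) := by
  refine (convex_Icc a b).image_sub_le_mul_sub_of_deriv_le
    (fun x hx => (hd x hx).continuousAt.continuousWithinAt)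
    (fun x hx => ((hd x (interior_subset hx)).differentiableAt).differentiableWithinAt)
    (fun x hx => ?_) a ⟨le_rfl, hab⟩ b ⟨hab, le_rfl⟩ hab
  rw [(hd x (interior_subset hx)).deriv]
  exact hle x (interior_subset hx)

theorem blowup_time_bound_of_riccati_type
    (T c₁ c₂ : ℝ) (hT : 0 < T) (hc₁ : 0 < c₁) (hc₂ : 0 < c₂)
    (V V' : ℝ → ℝ)
    (hderiv : ∀ t ∈ Set.Ico (0:ℝ) T, HasDerivAt V (V' t) t)
    (hcont : ContinuousOn V' (Set.Ico (0:ℝ) T))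
    (hineq : ∀ t ∈ Set.Ico (0:ℝ) T, V' t ≤ -c₁ * |V t| ^ ((4:ℝ)/3) - c₂) :
    T ≤ (1 + |V 0|) / c₂ + 3 / c₁ := by
  by_contra h
  push_neg at h
  set t₀ : ℝ := (1 + |V 0|) / c₂ with ht₀def
  set t₁ : ℝ := t₀ + 3 / c₁ with ht₁def
  have ht₀0 : 0 ≤ t₀ := div_nonneg (by positivity) hc₂.le
  have h3c : 0 < 3 / c₁ := by positivity
  have ht₁T : t₁ < T := h
  have ht₀t₁ : t₀ < t₁ := by rw [ht₁def]; linarith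
  have ht₀T : t₀ < T := ht₀t₁.trans ht₁T
  have hsub : ∀ {a b : ℝ}, 0 ≤ a → b < T → Set.Icc a b ⊆ Set.Ico 0 T := by
    intro a b ha hb x hx; exact ⟨le_trans ha hx.1, lt_of_le_of_lt hx.2 hb⟩
  -- Step 1: V' ≤ -c₂ everywhere
  have hV'le : ∀ t ∈ Set.Ico (0:ℝ) T, V' t ≤ -c₂ := by
    intro t ht
    have := hineq t ht
    have hpos : 0 ≤ c₁ * |V t| ^ ((4:ℝ)/3) :=
      mul_nonneg hc₁.le (Real.rpow_nonneg (abs_nonneg _) _)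
    linarith
  -- V t₀ ≤ -1
  have hVt₀ : V t₀ ≤ -1 := by
    have := key_mvt (f := V) (f' := V') ht₀0
      (fun x hx => hderiv x (hsub le_rfl ht₀T hx))
      (fun x hx => hV'le x (hsub le_rfl ht₀T hx))
    have hc₂t₀ : c₂ * t₀ = 1 + |V 0| := by rw [ht₀def]; field_simp
    have habs : V 0 ≤ |V 0| := le_abs_self _
    nlinarith
  -- V t ≤ -1 on [t₀, t₁]
  have hVle : ∀ t ∈ Set.Icc t₀ t₁, V t ≤ -1 := by
    intro t ht
    have hsub' : Set.Icc t₀ t ⊆ Set.Ico 0 T :=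
      hsub ht₀0 (lt_of_le_of_lt ht.2 ht₁T)
    have := key_mvt (f := V) (f' := V') ht.1
      (fun x hx => hderiv x (hsub' hx))
      (fun x hx => hV'le x (hsub' hx))
    nlinarith [ht.1]
  -- g = (-V) ^ (-1/3)
  set g : ℝ → ℝ := fun t => (-V t) ^ (-(1:ℝ)/3) with hgdef
  have hgd : ∀ t ∈ Set.Icc t₀ t₁,
      HasDerivAt g ((-V' t) * (-(1:ℝ)/3) * (-V t) ^ (-(1:ℝ)/3 - 1)) t := by
    intro t ht
    have hne : -V t ≠ 0 := by have := hVle t ht; intro hz; linarith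
    exact ((hderiv t (hsub ht₀0 ht₁T ht)).neg).rpow_const (Or.inl hne)
  have hgd' : ∀ t ∈ Set.Icc t₀ t₁,
      (-V' t) * (-(1:ℝ)/3) * (-V t) ^ (-(1:ℝ)/3 - 1) ≤ -(c₁/3) := by
    intro t ht
    have hV : V t ≤ -1 := hVle t ht
    have hVpos : (0:ℝ) < -V t := by linarith
    have habs : |V t| = -V t := abs_of_neg (by linarith)
    have hi := hineq t (hsub ht₀0 ht₁T ht)
    rw [habs] at hi
    have hr : (-V t) ^ (-(1:ℝ)/3 - 1) * (-V t) ^ ((4:ℝ)/3) = 1 := by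
      rw [← Real.rpow_add hVpos]; norm_num
    have hrpos : (0:ℝ) < (-V t) ^ (-(1:ℝ)/3 - 1) := Real.rpow_pos_of_pos hVpos _
    have hV' : -V' t ≥ c₁ * (-V t) ^ ((4:ℝ)/3) + c₂ := by linarith
    have h1 : (-V' t) * (-(1:ℝ)/3) * (-V t) ^ (-(1:ℝ)/3 - 1)
        ≤ (c₁ * (-V t) ^ ((4:ℝ)/3) + c₂) * (-(1:ℝ)/3) * (-V t) ^ (-(1:ℝ)/3 - 1) := by
      nlinarith
    calc (-V' t) * (-(1:ℝ)/3) * (-V t) ^ (-(1:ℝ)/3 - 1)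
        ≤ (c₁ * (-V t) ^ ((4:ℝ)/3) + c₂) * (-(1:ℝ)/3) * (-V t) ^ (-(1:ℝ)/3 - 1) := h1
      _ = -(c₁/3) * ((-V t) ^ (-(1:ℝ)/3 - 1) * (-V t) ^ ((4:ℝ)/3))
            - (c₂/3) * (-V t) ^ (-(1:ℝ)/3 - 1) := by ring
      _ ≤ -(c₁/3) := by rw [hr]; nlinarith
  have hkey := key_mvt (f := g)
    (f' := fun t => (-V' t) * (-(1:ℝ)/3) * (-V t) ^ (-(1:ℝ)/3 - 1))
    ht₀t₁.le hgd hgd'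
  have hgt₀ : g t₀ ≤ 1 := by
    have : (1:ℝ) ≤ -V t₀ := by have := hVle t₀ ⟨le_rfl, by linarith⟩; linarith
    exact Real.rpow_le_one_of_one_le_of_nonpos this (by norm_num)
  have hgt₁ : 0 < g t₁ := by
    have : (0:ℝ) < -V t₁ := by have := hVle t₁ ⟨by linarith, le_rfl⟩; linarith
    exact Real.rpow_pos_of_pos this _
  have ht₁t₀ : t₁ - t₀ = 3 / c₁ := by rw [ht₁def]; ring
  rw [ht₁t₀] at hkey
  have : -(c₁/3) * (3/c₁) = -1 := by field_simp
  rw [this] at hkey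
  linarith
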